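/- arXiv:1711.03996 — 3 statements merged into one kernel-verified Lean document; each statement's English description precedes it below -/
import Mathlib

section
/- Quality parameters of the two-dimensional uniform linear array: Fix R > 0 and an integer P ≥ 1, and consider the antenna placement Δ_{(k,j)} = (Rk/P, Rj/P) for k, j ∈ {0,…,P−1}, with difference set Q = {(Rq₁/P, Rq₂/P) : q₁, q₂ ∈ {−(P−1),…,P−1}}. Set R₀ = R·(2P−1)/(2P). Then the collection of squares I_q = {(R/P)·(q + y) : y ∈ [−1/2, 1/2]²}, indexed by q ∈ {−(P−1),…,P−1}², is a covering associated to Q which has the centroid property and the R₀-covering property, and its quality parameters satisfy β(R₀) ≤ R²/P and γ(R₀) ≤ 8·R⁴/P². -/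
open MeasureTheory Real Complex Function Set Classical

noncomputable section

/-- The plane `ℝ²` with the Euclidean metric. -/
abbrev E2 := EuclideanSpace ℝ (Fin 2)

/-- The circle `𝕋 = ℝ/2πℤ`. -/
abbrev T2 := AddCircle (2 * Real.pi)

instance : Fact (0 < 2 * Real.pi) := ⟨by positivity⟩

/-- Cosine as a function on the circle. -/
def cosC : T2 → ℝ := Real.cos_periodic.lift

/-- Sine as a function on the circle. -/
def sinC : T2 → ℝ := Real.sin_periodic.lift

/-- The plane wave `θ ↦ exp(i ⟨v, (cos θ, sin θ)⟩)`. -/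
def planeWave (v : E2) (θ : T2) : ℂ :=
  Complex.exp (Complex.I * ((v 0 * cosC θ + v 1 * sinC θ : ℝ) : ℂ))

/-- A covering associated to a finite family of points `q`. -/
def IsCovering {ι : Type*} [Fintype ι] (q : ι → E2) (I : ι → Set E2) : Prop :=
  (∀ j, MeasurableSet (I j)) ∧ (∀ i j, i ≠ j → volume (I i ∩ I j) = 0) ∧ (∀ j, q j ∈ I j)

/-- The `R`-covering property. -/
def RCovers {ι : Type*} [Fintype ι] (R : ℝ) (I : ι → Set E2) : Prop :=
  Metric.closedBall (0 : E2) R ⊆ ⋃ j, I j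

/-- The centroid property. -/
def CentroidProp {ι : Type*} [Fintype ι] (q : ι → E2) (I : ι → Set E2) : Prop :=
  ∀ j, 0 < volume (I j) → (volume (I j)).toReal⁻¹ • (∫ x in I j, x) = q j

/-- The quality parameter `β(R)`. -/
def betaP {ι : Type*} [Fintype ι] (R : ℝ) (I : ι → Set E2) : ℝ :=
  R * Real.sqrt (⨆ j, (volume (I j ∩ Metric.closedBall 0 R)).toReal)

/-- The quality parameter `γ(R)`. -/
def gammaP {ι : Type*} [Fintype ι] (R : ℝ) (I : ι → Set E2) : ℝ :=
  ∑ j, (Metric.diam (I j ∩ Metric.closedBall 0 R)) ^ 2 *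
    (volume (I j ∩ Metric.closedBall 0 R)).toReal

/-- A finite complex Borel measure, represented by a finite nonnegative base measure
together with an integrable complex density. -/
structure CMeas (X : Type*) [MeasurableSpace X] where
  base : Measure X
  finite : IsFiniteMeasure base
  dens : X → ℂ
  integrable : Integrable dens base

namespace CMeas

variable {X : Type*} [MeasurableSpace X]

/-- Integration of a function against a complex measure. -/
def integr (μ : CMeas X) (g : X → ℂ) : ℂ := ∫ x, g x * μ.dens x ∂μ.base

/-- The value of the complex measure on a set. -/
def val (μ : CMeas X) (s : Set X) : ℂ := ∫ x in s, μ.dens x ∂μ.base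

/-- The total variation norm of a complex measure. -/
def tv (μ : CMeas X) : ℝ := ∫ x, ‖μ.dens x‖ ∂μ.base

/-- The support of (the total variation measure of) a complex measure. -/
def supp [TopologicalSpace X] (μ : CMeas X) : Set X :=
  {x | ∀ U : Set X, IsOpen U → x ∈ U → (∫ y in U, ‖μ.dens y‖ ∂μ.base) ≠ 0}

end CMeas

/-- The covariance measurement operator associated to antenna positions `Δ`. -/
def Mop {m : ℕ} (Δ : Fin m → E2) (μ : CMeas T2) : Matrix (Fin m) (Fin m) ℂ :=
  fun k l => μ.integr (planeWave (Δ k - Δ l))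

/-- The autocorrelation function of a filter on the circle. -/
def autocorr (φ : T2 → ℂ) (θ : T2) : ℂ :=
  ∫ ω : T2, φ ω * (starRingEnd ℂ) (φ (ω - θ))

/-- The Frobenius norm of a complex matrix. -/
def frob {m : ℕ} (A : Matrix (Fin m) (Fin m) ℂ) : ℝ :=
  Real.sqrt (∑ k, ∑ l, ‖A k l‖ ^ 2)

/-- A point of the plane from its two coordinates. -/
def e2 (x y : ℝ) : E2 := WithLp.toLp 2 ![x, y]

namespace ULAHelp

lemma e2_ext {x y : E2} (h0 : x 0 = y 0) (h1 : x 1 = y 1) : x = y := by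
  apply PiLp.ext
  intro j
  have hj : j = 0 ∨ j = 1 := by omega
  rcases hj with rfl | rfl <;> assumption

def rect (l u l' u' : ℝ) : Set E2 := {x : E2 | x 0 ∈ Set.Icc l u ∧ x 1 ∈ Set.Icc l' u'}

lemma rect_eq_preimage (l u l' u' : ℝ) :
    rect l u l' u' = ((MeasurableEquiv.toLp 2 (Fin 2 → ℝ)).symm) ⁻¹'
      (Set.pi Set.univ ![Set.Icc l u, Set.Icc l' u']) := by
  ext x
  simp only [rect, Set.mem_preimage, Set.mem_pi, Set.mem_univ, forall_true_left,
    Fin.forall_fin_two, Set.mem_setOf_eq]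
  rfl

lemma pi_eq_preimage (l u l' u' : ℝ) :
    Set.pi Set.univ ![Set.Icc l u, Set.Icc l' u'] =
      (MeasurableEquiv.finTwoArrow : (Fin 2 → ℝ) ≃ᵐ ℝ × ℝ) ⁻¹' (Set.Icc l u ×ˢ Set.Icc l' u') := by
  ext y
  simp only [Set.mem_pi, Set.mem_univ, forall_true_left, Fin.forall_fin_two, Set.mem_preimage,
    MeasurableEquiv.finTwoArrow, Set.mem_prod]
  rfl

lemma integral_Icc_id {l u : ℝ} (h : l ≤ u) : ∫ x in Set.Icc l u, x = (u ^ 2 - l ^ 2) / 2 := by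
  rw [integral_Icc_eq_integral_Ioc, ← intervalIntegral.integral_of_le h, integral_id]

lemma integrableOn_prod_fst (l u l' u' : ℝ) :
    IntegrableOn (fun p : ℝ × ℝ => p.1) (Set.Icc l u ×ˢ Set.Icc l' u') volume :=
  continuous_fst.continuousOn.integrableOn_compact (isCompact_Icc.prod isCompact_Icc)

lemma integral_prod_fst {l u l' u' : ℝ} (h : l ≤ u) (h' : l' ≤ u') :
    ∫ p in Set.Icc l u ×ˢ Set.Icc l' u', p.1 = (u ^ 2 - l ^ 2) / 2 * (u' - l') := by
  rw [Measure.volume_eq_prod, setIntegral_prod _ (by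
    rw [← Measure.volume_eq_prod]; exact integrableOn_prod_fst l u l' u')]
  simp only [setIntegral_const, smul_eq_mul, measureReal_def, Real.volume_Icc,
    ENNReal.toReal_ofReal (by linarith : (0:ℝ) ≤ u' - l')]
  rw [integral_const_mul, integral_Icc_id h]
  ring

lemma integral_prod_snd {l u l' u' : ℝ} (h : l ≤ u) (h' : l' ≤ u') :
    ∫ p in Set.Icc l u ×ˢ Set.Icc l' u', p.2 = (u - l) * ((u' ^ 2 - l' ^ 2) / 2) := by
  rw [Measure.volume_eq_prod, setIntegral_prod _ (by
    rw [← Measure.volume_eq_prod]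
    exact continuous_snd.continuousOn.integrableOn_compact (isCompact_Icc.prod isCompact_Icc))]
  simp only [integral_Icc_id h']
  simp [Real.volume_Icc, ENNReal.toReal_ofReal (by linarith : (0:ℝ) ≤ u - l), smul_eq_mul]
  exact Or.inl h

lemma isCompact_rect (l u l' u' : ℝ) : IsCompact (rect l u l' u') := by
  have hS : IsCompact (Set.pi Set.univ ![Set.Icc l u, Set.Icc l' u']) :=
    isCompact_univ_pi (by intro i; fin_cases i <;> exact isCompact_Icc)
  have hh : rect l u l' u' = (EuclideanSpace.equiv (Fin 2) ℝ).toHomeomorph ⁻¹'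
      (Set.pi Set.univ ![Set.Icc l u, Set.Icc l' u']) := rect_eq_preimage l u l' u'
  rw [hh]
  exact (EuclideanSpace.equiv (Fin 2) ℝ).toHomeomorph.isCompact_preimage.2 hS

lemma volume_rect (l u l' u' : ℝ) :
    volume (rect l u l' u') = ENNReal.ofReal (u - l) * ENNReal.ofReal (u' - l') := by
  rw [rect_eq_preimage,
    (EuclideanSpace.volume_preserving_symm_measurableEquiv_toLp (Fin 2)).measure_preimage
      (MeasurableSet.univ_pi (by
        intro i
        fin_cases i <;> exact measurableSet_Icc)).nullMeasurableSet,
    volume_pi_pi, Fin.prod_univ_two]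
  simp [Real.volume_Icc]

lemma measurableSet_rect (l u l' u' : ℝ) : MeasurableSet (rect l u l' u') := by
  rw [rect_eq_preimage]
  exact ((MeasurableEquiv.toLp 2 (Fin 2 → ℝ)).symm).measurable
    (MeasurableSet.univ_pi (by intro i; fin_cases i <;> exact measurableSet_Icc))

lemma integral_rect_coord (l u l' u' : ℝ) (j : Fin 2) :
    ∫ x in rect l u l' u', x j =
      ∫ p in Set.Icc l u ×ˢ Set.Icc l' u', (if j = 0 then p.1 else p.2) := by
  have h1 := (EuclideanSpace.volume_preserving_symm_measurableEquiv_toLp (Fin 2)).setIntegral_preimage_emb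
    ((MeasurableEquiv.toLp 2 (Fin 2 → ℝ)).symm).measurableEmbedding
    (fun y : Fin 2 → ℝ => y j) (Set.pi Set.univ ![Set.Icc l u, Set.Icc l' u'])
  have h2 := (volume_preserving_finTwoArrow ℝ).setIntegral_preimage_emb
    (MeasurableEquiv.finTwoArrow).measurableEmbedding
    (fun p : ℝ × ℝ => if j = 0 then p.1 else p.2) (Set.Icc l u ×ˢ Set.Icc l' u')
  rw [rect_eq_preimage]
  calc ∫ x in ((MeasurableEquiv.toLp 2 (Fin 2 → ℝ)).symm) ⁻¹'
        (Set.pi Set.univ ![Set.Icc l u, Set.Icc l' u']), x j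
      = ∫ y in Set.pi Set.univ ![Set.Icc l u, Set.Icc l' u'], y j := h1
    _ = ∫ y in (MeasurableEquiv.finTwoArrow : (Fin 2 → ℝ) ≃ᵐ ℝ × ℝ) ⁻¹'
        (Set.Icc l u ×ˢ Set.Icc l' u'), y j := by rw [pi_eq_preimage]
    _ = ∫ p in Set.Icc l u ×ˢ Set.Icc l' u', (if j = 0 then p.1 else p.2) := by
        rw [← h2]
        refine setIntegral_congr_fun ?_ ?_
        · exact ((measurableSet_Icc.prod measurableSet_Icc).preimage
            (MeasurableEquiv.finTwoArrow).measurable)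
        · intro y _
          fin_cases j <;> rfl

lemma integrableOn_rect_id (l u l' u' : ℝ) :
    IntegrableOn (fun x : E2 => x) (rect l u l' u') volume :=
  continuous_id.continuousOn.integrableOn_compact (isCompact_rect l u l' u')

lemma integral_rect {l u l' u' : ℝ} (h : l ≤ u) (h' : l' ≤ u') :
    (∫ x in rect l u l' u', x) = ((u - l) * (u' - l')) • e2 ((l + u) / 2) ((l' + u') / 2) := by
  have hint := integrableOn_rect_id l u l' u'
  apply PiLp.ext
  intro j
  have hcoord : (∫ x in rect l u l' u', x) j = ∫ x in rect l u l' u', x j := by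
    have := (EuclideanSpace.proj (𝕜 := ℝ) j).integral_comp_comm hint
    exact this.symm
  rw [hcoord, integral_rect_coord]
  have hj : j = 0 ∨ j = 1 := by omega
  rcases hj with rfl | rfl
  · simp only [reduceIte]
    rw [integral_prod_fst h h']
    show _ = (u - l) * (u' - l') * ((l + u) / 2)
    ring
  · simp only [Fin.one_eq_zero_iff, OfNat.ofNat_ne_one, reduceIte]
    rw [integral_prod_snd h h']
    show _ = (u - l) * (u' - l') * ((l' + u') / 2)
    ring

lemma rect_inter (a b c d a' b' c' d' : ℝ) :
    rect a b c d ∩ rect a' b' c' d' = rect (max a a') (min b b') (max c c') (min d d') := by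
  ext x
  simp only [rect, Set.mem_inter_iff, Set.mem_setOf_eq, Set.mem_Icc, max_le_iff, le_min_iff,
    sup_le_iff, le_inf_iff]
  constructor
  · rintro ⟨⟨h1, h2⟩, h3, h4⟩
    exact ⟨⟨⟨h1.1, h3.1⟩, h1.2, h3.2⟩, ⟨h2.1, h4.1⟩, h2.2, h4.2⟩
  · rintro ⟨⟨⟨h1, h2⟩, h3, h4⟩, ⟨h5, h6⟩, h7, h8⟩
    exact ⟨⟨⟨h1, h3⟩, h5, h7⟩, ⟨h2, h4⟩, h6, h8⟩

lemma volume_rect_inter_zero {a b c d a' b' c' d' : ℝ}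
    (hcase : min b b' ≤ max a a' ∨ min d d' ≤ max c c') :
    volume (rect a b c d ∩ rect a' b' c' d') = 0 := by
  rw [rect_inter, volume_rect]
  rcases hcase with hc | hc
  · have h0 : ENNReal.ofReal (min b b' - max a a') = 0 := ENNReal.ofReal_eq_zero.2 (by linarith)
    rw [h0, zero_mul]
  · have h0 : ENNReal.ofReal (min d d' - max c c') = 0 := ENNReal.ofReal_eq_zero.2 (by linarith)
    rw [h0, mul_zero]

lemma cover1 (s : ℝ) (hs : 0 < s) (m : ℕ) (hm : 1 ≤ m) (x : ℝ) (hx : |x| ≤ s * m / 2) :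
    ∃ n : ℕ, n < m ∧ s * n - s * m / 2 ≤ x ∧ x ≤ s * (n + 1) - s * m / 2 := by
  obtain ⟨hx1, hx2⟩ := abs_le.mp hx
  set t := (x + s * m / 2) / s with ht_def
  have ht0 : 0 ≤ t := div_nonneg (by linarith) hs.le
  have htm : t ≤ m := by
    rw [ht_def, div_le_iff₀ hs]
    nlinarith
  have hxt : x = s * t - s * m / 2 := by
    rw [ht_def]
    field_simp
    ring
  rcases le_or_gt ⌊t⌋₊ (m - 1) with hc | hc
  · refine ⟨⌊t⌋₊, by omega, ?_, ?_⟩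
    · nlinarith [Nat.floor_le ht0]
    · nlinarith [Nat.lt_floor_add_one t]
  · have hge : (m : ℝ) ≤ t := by
      have hmf : m ≤ ⌊t⌋₊ := by omega
      exact_mod_cast le_trans (Nat.cast_le.2 hmf) (Nat.floor_le ht0)
    have hteq : t = m := le_antisymm htm hge
    have hm1 : ((m - 1 : ℕ) : ℝ) = (m : ℝ) - 1 := by
      push_cast [Nat.cast_sub hm]
      ring
    refine ⟨m - 1, by omega, ?_, ?_⟩
    · rw [hm1]
      nlinarith
    · rw [hm1]
      nlinarith

lemma coord_abs_le_norm (x : E2) (j : Fin 2) : |x j| ≤ ‖x‖ := by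
  rw [EuclideanSpace.norm_eq, Fin.sum_univ_two]
  have h0 : |x j| = Real.sqrt (|x j| ^ 2) := (Real.sqrt_sq (abs_nonneg _)).symm
  rw [h0]
  apply Real.sqrt_le_sqrt
  have hj : j = 0 ∨ j = 1 := by omega
  rcases hj with rfl | rfl
  · simp only [Real.norm_eq_abs]
    nlinarith [sq_nonneg |x 1|]
  · simp only [Real.norm_eq_abs]
    nlinarith [sq_nonneg |x 0|]

end ULAHelp

set_option maxHeartbeats 2000000 in
/-- **Quality parameters of the two-dimensional uniform linear array.** -/
theorem two_dim_ula_quality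
    (R : ℝ) (hR : 0 < R) (P : ℕ) (hP : 1 ≤ P)
    (Δ : Fin P × Fin P → E2)
    (hΔ : ∀ kj : Fin P × Fin P, Δ kj = (R / P) • e2 (kj.1 : ℕ) (kj.2 : ℕ))
    (q : Fin (2 * P - 1) × Fin (2 * P - 1) → E2)
    (hq : ∀ i, q i = (R / P) • e2 (((i.1 : ℕ) : ℝ) - ((P : ℝ) - 1))
        (((i.2 : ℕ) : ℝ) - ((P : ℝ) - 1)))
    (I : Fin (2 * P - 1) × Fin (2 * P - 1) → Set E2)
    (hI : ∀ i, I i = (fun y : E2 => q i + (R / P) • y) ''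
        {y : E2 | y 0 ∈ Set.Icc (-(1 / 2) : ℝ) (1 / 2) ∧ y 1 ∈ Set.Icc (-(1 / 2) : ℝ) (1 / 2)})
    (R₀ : ℝ) (hR₀ : R₀ = R * (2 * (P : ℝ) - 1) / (2 * P)) :
    {x : E2 | ∃ kj kj' : Fin P × Fin P, x = Δ kj - Δ kj'} = Set.range q ∧
    IsCovering q I ∧ CentroidProp q I ∧ RCovers R₀ I ∧
    betaP R₀ I ≤ R ^ 2 / P ∧ gammaP R₀ I ≤ 8 * R ^ 4 / P ^ 2 := by
  classical
  have hP0 : (0:ℝ) < P := by exact_mod_cast hP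
  set s : ℝ := R / P with hs_def
  have hs : 0 < s := div_pos hR hP0
  have hM : ((2 * P - 1 : ℕ) : ℝ) = 2 * (P:ℝ) - 1 := by
    push_cast [Nat.cast_sub (by omega : 1 ≤ 2 * P)]
    ring
  have hq0 : ∀ i, q i 0 = s * (((i.1 : ℕ) : ℝ) - ((P:ℝ) - 1)) := by
    intro i; rw [hq]; rfl
  have hq1 : ∀ i, q i 1 = s * (((i.2 : ℕ) : ℝ) - ((P:ℝ) - 1)) := by
    intro i; rw [hq]; rfl
  clear_value s
  have hIr : ∀ i, I i = ULAHelp.rect (q i 0 - s/2) (q i 0 + s/2) (q i 1 - s/2) (q i 1 + s/2) := by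
    intro i
    rw [hI]
    ext x
    constructor
    · rintro ⟨y, ⟨hy0, hy1⟩, rfl⟩
      obtain ⟨h1, h2⟩ := hy0
      obtain ⟨h3, h4⟩ := hy1
      refine ⟨Set.mem_Icc.2 ⟨?_, ?_⟩, Set.mem_Icc.2 ⟨?_, ?_⟩⟩
      · show q i 0 - s/2 ≤ q i 0 + s * y 0
        nlinarith
      · show q i 0 + s * y 0 ≤ q i 0 + s/2
        nlinarith
      · show q i 1 - s/2 ≤ q i 1 + s * y 1
        nlinarith
      · show q i 1 + s * y 1 ≤ q i 1 + s/2
        nlinarith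
    · rintro ⟨hx0, hx1⟩
      rw [Set.mem_Icc] at hx0 hx1
      refine ⟨e2 ((x 0 - q i 0)/s) ((x 1 - q i 1)/s), ⟨?_, ?_⟩, ?_⟩
      · show (x 0 - q i 0)/s ∈ Set.Icc (-(1/2) : ℝ) (1/2)
        rw [Set.mem_Icc]
        constructor
        · rw [le_div_iff₀ hs]; linarith
        · rw [div_le_iff₀ hs]; linarith
      · show (x 1 - q i 1)/s ∈ Set.Icc (-(1/2) : ℝ) (1/2)
        rw [Set.mem_Icc]
        constructor
        · rw [le_div_iff₀ hs]; linarith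
        · rw [div_le_iff₀ hs]; linarith
      · apply ULAHelp.e2_ext
        · show q i 0 + s * ((x 0 - q i 0)/s) = x 0
          field_simp
          ring
        · show q i 1 + s * ((x 1 - q i 1)/s) = x 1
          field_simp
          ring
  -- volume bound used in beta and gamma
  have hvol : ∀ i, (volume (I i ∩ Metric.closedBall 0 R₀)).toReal ≤ s * s := by
    intro i
    have h1 : volume (I i ∩ Metric.closedBall 0 R₀) ≤ volume (I i) :=
      measure_mono Set.inter_subset_left
    have h2 : volume (I i) = ENNReal.ofReal s * ENNReal.ofReal s := by
      rw [hIr i, ULAHelp.volume_rect,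
        show q i 0 + s/2 - (q i 0 - s/2) = s from by ring,
        show q i 1 + s/2 - (q i 1 - s/2) = s from by ring]
    rw [h2] at h1
    calc (volume (I i ∩ Metric.closedBall 0 R₀)).toReal
        ≤ (ENNReal.ofReal s * ENNReal.ofReal s).toReal :=
          ENNReal.toReal_mono (ENNReal.mul_ne_top ENNReal.ofReal_ne_top ENNReal.ofReal_ne_top) h1
      _ = s * s := by rw [ENNReal.toReal_mul, ENNReal.toReal_ofReal hs.le]
  have hR₀nonneg : 0 ≤ R₀ := by
    rw [hR₀]
    apply div_nonneg _ (by positivity)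
    nlinarith
  have hR₀le : R₀ ≤ R := by
    rw [hR₀, div_le_iff₀ (by positivity)]
    nlinarith
  refine ⟨?_, ⟨?_, ?_, ?_⟩, ?_, ?_, ?_, ?_⟩
  -- 1. difference set
  · ext x
    simp only [Set.mem_setOf_eq, Set.mem_range]
    constructor
    · rintro ⟨kj, kj', rfl⟩
      have ha1 : (kj.1 : ℕ) < P := kj.1.isLt
      have hb1 : (kj'.1 : ℕ) < P := kj'.1.isLt
      have ha2 : (kj.2 : ℕ) < P := kj.2.isLt
      have hb2 : (kj'.2 : ℕ) < P := kj'.2.isLt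
      refine ⟨(⟨(kj.1:ℕ) + (P-1) - (kj'.1:ℕ), by omega⟩,
               ⟨(kj.2:ℕ) + (P-1) - (kj'.2:ℕ), by omega⟩), ?_⟩
      rw [hq, hΔ kj, hΔ kj']
      apply ULAHelp.e2_ext
      · have hnat : ((kj.1:ℕ) + (P-1) - (kj'.1:ℕ)) + (kj'.1:ℕ) + 1 = (kj.1:ℕ) + P := by omega
        have hcast : ((((kj.1:ℕ) + (P-1) - (kj'.1:ℕ) : ℕ)) : ℝ) + ((kj'.1:ℕ):ℝ) + 1
            = ((kj.1:ℕ):ℝ) + (P:ℝ) := by exact_mod_cast hnat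
        show s * (((((kj.1:ℕ) + (P-1) - (kj'.1:ℕ) : ℕ)) : ℝ) - ((P:ℝ)-1))
            = s * ((kj.1:ℕ):ℝ) - s * ((kj'.1:ℕ):ℝ)
        linear_combination s * hcast
      · have hnat : ((kj.2:ℕ) + (P-1) - (kj'.2:ℕ)) + (kj'.2:ℕ) + 1 = (kj.2:ℕ) + P := by omega
        have hcast : ((((kj.2:ℕ) + (P-1) - (kj'.2:ℕ) : ℕ)) : ℝ) + ((kj'.2:ℕ):ℝ) + 1
            = ((kj.2:ℕ):ℝ) + (P:ℝ) := by exact_mod_cast hnat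
        show s * (((((kj.2:ℕ) + (P-1) - (kj'.2:ℕ) : ℕ)) : ℝ) - ((P:ℝ)-1))
            = s * ((kj.2:ℕ):ℝ) - s * ((kj'.2:ℕ):ℝ)
        linear_combination s * hcast
    · rintro ⟨i, rfl⟩
      have hn1 : (i.1:ℕ) < 2*P-1 := i.1.isLt
      have hn2 : (i.2:ℕ) < 2*P-1 := i.2.isLt
      obtain ⟨a1, b1, ha1, hb1, hab1⟩ :
          ∃ a b : ℕ, a < P ∧ b < P ∧ a + P = (i.1:ℕ) + b + 1 := by
        refine ⟨if P - 1 ≤ (i.1:ℕ) then (i.1:ℕ) - (P-1) else 0,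
                if P - 1 ≤ (i.1:ℕ) then 0 else (P-1) - (i.1:ℕ), ?_, ?_, ?_⟩ <;>
          split <;> omega
      obtain ⟨a2, b2, ha2, hb2, hab2⟩ :
          ∃ a b : ℕ, a < P ∧ b < P ∧ a + P = (i.2:ℕ) + b + 1 := by
        refine ⟨if P - 1 ≤ (i.2:ℕ) then (i.2:ℕ) - (P-1) else 0,
                if P - 1 ≤ (i.2:ℕ) then 0 else (P-1) - (i.2:ℕ), ?_, ?_, ?_⟩ <;>
          split <;> omega
      refine ⟨(⟨a1, ha1⟩, ⟨a2, ha2⟩), (⟨b1, hb1⟩, ⟨b2, hb2⟩), ?_⟩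
      rw [hq, hΔ, hΔ]
      apply ULAHelp.e2_ext
      · have hc : (a1:ℝ) + (P:ℝ) = ((i.1:ℕ):ℝ) + (b1:ℝ) + 1 := by exact_mod_cast hab1
        show s * (((i.1:ℕ):ℝ) - ((P:ℝ)-1)) = s * (a1:ℝ) - s * (b1:ℝ)
        linear_combination (-s) * hc
      · have hc : (a2:ℝ) + (P:ℝ) = ((i.2:ℕ):ℝ) + (b2:ℝ) + 1 := by exact_mod_cast hab2
        show s * (((i.2:ℕ):ℝ) - ((P:ℝ)-1)) = s * (a2:ℝ) - s * (b2:ℝ)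
        linear_combination (-s) * hc
  -- 2a. measurable
  · intro j
    rw [hIr j]
    exact ULAHelp.measurableSet_rect _ _ _ _
  -- 2b. a.e. disjoint
  · intro i j hij
    have hij' : i.1 ≠ j.1 ∨ i.2 ≠ j.2 := by
      by_contra hcon
      push_neg at hcon
      exact hij (Prod.ext hcon.1 hcon.2)
    have hsep : ∀ a b : Fin (2*P-1), a ≠ b →
        s ≤ |s * (((a:ℕ):ℝ) - ((P:ℝ)-1)) - s * (((b:ℕ):ℝ) - ((P:ℝ)-1))| := by
      intro a b hab
      have hne : (a:ℕ) ≠ (b:ℕ) := fun h => hab (Fin.ext h)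
      have h1 : (1:ℝ) ≤ |((a:ℕ):ℝ) - ((b:ℕ):ℝ)| := by
        rcases lt_or_gt_of_ne hne with h | h
        · rw [le_abs]
          right
          have : ((a:ℕ):ℝ) + 1 ≤ ((b:ℕ):ℝ) := by exact_mod_cast h
          linarith
        · rw [le_abs]
          left
          have : ((b:ℕ):ℝ) + 1 ≤ ((a:ℕ):ℝ) := by exact_mod_cast h
          linarith
      calc s = s * 1 := (mul_one s).symm
        _ ≤ s * |((a:ℕ):ℝ) - ((b:ℕ):ℝ)| := mul_le_mul_of_nonneg_left h1 hs.le
        _ = |s * (((a:ℕ):ℝ) - ((b:ℕ):ℝ))| := by rw [abs_mul, abs_of_pos hs]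
        _ = |s * (((a:ℕ):ℝ) - ((P:ℝ)-1)) - s * (((b:ℕ):ℝ) - ((P:ℝ)-1))| := by
            congr 1
            ring
    rw [hIr i, hIr j]
    apply ULAHelp.volume_rect_inter_zero
    rcases hij' with hne | hne
    · left
      have hsep' : s ≤ |q i 0 - q j 0| := by
        rw [hq0 i, hq0 j]; exact hsep i.1 j.1 hne
      rcases abs_cases (q i 0 - q j 0) with ⟨heq, _⟩ | ⟨heq, _⟩ <;> rw [heq] at hsep'
      · calc min (q i 0 + s/2) (q j 0 + s/2) ≤ q j 0 + s/2 := min_le_right _ _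
          _ ≤ q i 0 - s/2 := by linarith
          _ ≤ max (q i 0 - s/2) (q j 0 - s/2) := le_max_left _ _
      · calc min (q i 0 + s/2) (q j 0 + s/2) ≤ q i 0 + s/2 := min_le_left _ _
          _ ≤ q j 0 - s/2 := by linarith
          _ ≤ max (q i 0 - s/2) (q j 0 - s/2) := le_max_right _ _
    · right
      have hsep' : s ≤ |q i 1 - q j 1| := by
        rw [hq1 i, hq1 j]; exact hsep i.2 j.2 hne
      rcases abs_cases (q i 1 - q j 1) with ⟨heq, _⟩ | ⟨heq, _⟩ <;> rw [heq] at hsep'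
      · calc min (q i 1 + s/2) (q j 1 + s/2) ≤ q j 1 + s/2 := min_le_right _ _
          _ ≤ q i 1 - s/2 := by linarith
          _ ≤ max (q i 1 - s/2) (q j 1 - s/2) := le_max_left _ _
      · calc min (q i 1 + s/2) (q j 1 + s/2) ≤ q i 1 + s/2 := min_le_left _ _
          _ ≤ q j 1 - s/2 := by linarith
          _ ≤ max (q i 1 - s/2) (q j 1 - s/2) := le_max_right _ _
  -- 2c. q j ∈ I j
  · intro j
    rw [hIr j]
    exact ⟨Set.mem_Icc.2 ⟨by linarith, by linarith⟩, Set.mem_Icc.2 ⟨by linarith, by linarith⟩⟩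
  -- 3. centroid
  · intro i _
    rw [hIr i, ULAHelp.volume_rect, ULAHelp.integral_rect (by linarith) (by linarith),
      show q i 0 + s/2 - (q i 0 - s/2) = s from by ring,
      show q i 1 + s/2 - (q i 1 - s/2) = s from by ring,
      show (q i 0 - s/2 + (q i 0 + s/2))/2 = q i 0 from by ring,
      show (q i 1 - s/2 + (q i 1 + s/2))/2 = q i 1 from by ring,
      ENNReal.toReal_mul, ENNReal.toReal_ofReal hs.le, smul_smul,
      inv_mul_cancel₀ (mul_pos hs hs).ne', one_smul]
    exact ULAHelp.e2_ext rfl rfl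
  -- 4. covering
  · intro x hx
    have hxn : ‖x‖ ≤ R₀ := by rwa [Metric.mem_closedBall, dist_zero_right] at hx
    have hR₀s : R₀ = s * ((2*P-1 : ℕ):ℝ) / 2 := by
      rw [hR₀, hM, hs_def, div_mul_eq_mul_div, div_div,
        show (2:ℝ)*(P:ℝ) = (P:ℝ)*2 from mul_comm _ _]
    have hcov : ∀ j : Fin 2, ∃ n : ℕ, n < 2*P-1 ∧
        s*(n:ℝ) - s*((2*P-1:ℕ):ℝ)/2 ≤ x j ∧ x j ≤ s*((n:ℝ)+1) - s*((2*P-1:ℕ):ℝ)/2 := by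
      intro j
      apply ULAHelp.cover1 s hs (2*P-1) (by omega)
      calc |x j| ≤ ‖x‖ := ULAHelp.coord_abs_le_norm x j
        _ ≤ R₀ := hxn
        _ = s * ((2*P-1:ℕ):ℝ)/2 := hR₀s
    obtain ⟨n1, hn1, hl1, hu1⟩ := hcov 0
    obtain ⟨n2, hn2, hl2, hu2⟩ := hcov 1
    refine Set.mem_iUnion.2 ⟨(⟨n1, hn1⟩, ⟨n2, hn2⟩), ?_⟩
    rw [hIr]
    have hc0 : q (⟨n1, hn1⟩, ⟨n2, hn2⟩) 0 = s * ((n1:ℝ) - ((P:ℝ)-1)) := hq0 _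
    have hc1 : q (⟨n1, hn1⟩, ⟨n2, hn2⟩) 1 = s * ((n2:ℝ) - ((P:ℝ)-1)) := hq1 _
    rw [hM] at hl1 hu1 hl2 hu2
    refine ⟨Set.mem_Icc.2 ⟨?_, ?_⟩, Set.mem_Icc.2 ⟨?_, ?_⟩⟩
    · rw [hc0, show s * ((n1:ℝ) - ((P:ℝ)-1)) - s/2 = s*(n1:ℝ) - s*(2*(P:ℝ)-1)/2 from by ring]
      exact hl1
    · rw [hc0, show s * ((n1:ℝ) - ((P:ℝ)-1)) + s/2 = s*((n1:ℝ)+1) - s*(2*(P:ℝ)-1)/2 from by ring]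
      exact hu1
    · rw [hc1, show s * ((n2:ℝ) - ((P:ℝ)-1)) - s/2 = s*(n2:ℝ) - s*(2*(P:ℝ)-1)/2 from by ring]
      exact hl2
    · rw [hc1, show s * ((n2:ℝ) - ((P:ℝ)-1)) + s/2 = s*((n2:ℝ)+1) - s*(2*(P:ℝ)-1)/2 from by ring]
      exact hu2
  -- 5. beta
  · have hne : Nonempty (Fin (2*P-1) × Fin (2*P-1)) := ⟨(⟨0, by omega⟩, ⟨0, by omega⟩)⟩
    have hsup : (⨆ i, (volume (I i ∩ Metric.closedBall 0 R₀)).toReal) ≤ s * s := ciSup_le hvol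
    have hsqrt : Real.sqrt (⨆ i, (volume (I i ∩ Metric.closedBall 0 R₀)).toReal) ≤ s := by
      rw [show s = Real.sqrt (s*s) from (Real.sqrt_mul_self hs.le).symm]
      exact Real.sqrt_le_sqrt hsup
    calc betaP R₀ I
        = R₀ * Real.sqrt (⨆ i, (volume (I i ∩ Metric.closedBall 0 R₀)).toReal) := rfl
      _ ≤ R * s := mul_le_mul hR₀le hsqrt (Real.sqrt_nonneg _) hR.le
      _ = R^2/P := by rw [hs_def]; ring
  -- 6. gamma
  · have hdiam : ∀ i, Metric.diam (I i ∩ Metric.closedBall 0 R₀) ≤ Real.sqrt (s^2 + s^2) := by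
      intro i
      apply Metric.diam_le_of_forall_dist_le (Real.sqrt_nonneg _)
      intro x hx y hy
      rw [hIr i] at hx hy
      obtain ⟨⟨hx0, hx1⟩, -⟩ := hx
      obtain ⟨⟨hy0, hy1⟩, -⟩ := hy
      rw [Set.mem_Icc] at hx0 hx1 hy0 hy1
      rw [EuclideanSpace.dist_eq, Fin.sum_univ_two]
      apply Real.sqrt_le_sqrt
      have d0 : dist (x 0) (y 0) ≤ s := by
        rw [Real.dist_eq, abs_le]; constructor <;> linarith
      have d1 : dist (x 1) (y 1) ≤ s := by
        rw [Real.dist_eq, abs_le]; constructor <;> linarith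
      have e0 := dist_nonneg (x := x 0) (y := y 0)
      have e1 := dist_nonneg (x := x 1) (y := y 1)
      nlinarith
    have hterm : ∀ i, (Metric.diam (I i ∩ Metric.closedBall 0 R₀))^2 *
        (volume (I i ∩ Metric.closedBall 0 R₀)).toReal ≤ (2*s^2) * (s*s) := by
      intro i
      have hd2 : (Metric.diam (I i ∩ Metric.closedBall 0 R₀))^2 ≤ 2*s^2 := by
        calc (Metric.diam (I i ∩ Metric.closedBall 0 R₀))^2
            ≤ (Real.sqrt (s^2 + s^2))^2 :=
              pow_le_pow_left₀ Metric.diam_nonneg (hdiam i) 2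
          _ = s^2 + s^2 := Real.sq_sqrt (by positivity)
          _ = 2*s^2 := by ring
      exact mul_le_mul hd2 (hvol i) ENNReal.toReal_nonneg (by positivity)
    have hcardle : ((2*P-1:ℕ):ℝ) ≤ 2*(P:ℝ) := by rw [hM]; linarith
    calc gammaP R₀ I
        = ∑ i : Fin (2*P-1) × Fin (2*P-1), (Metric.diam (I i ∩ Metric.closedBall 0 R₀))^2 *
            (volume (I i ∩ Metric.closedBall 0 R₀)).toReal := rfl
      _ ≤ ∑ _i : Fin (2*P-1) × Fin (2*P-1), (2*s^2) * (s*s) :=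
          Finset.sum_le_sum (fun i _ => hterm i)
      _ = (((2*P-1) * (2*P-1) : ℕ) : ℝ) * ((2*s^2) * (s*s)) := by
          rw [Finset.sum_const, Finset.card_univ, Fintype.card_prod, Fintype.card_fin,
            nsmul_eq_mul]
      _ ≤ (4*(P:ℝ)^2) * ((2*s^2) * (s*s)) := by
          apply mul_le_mul_of_nonneg_right _ (by positivity)
          push_cast
          nlinarith
      _ = 8 * R^4 / P^2 := by
          rw [hs_def]
          field_simp
          ring

end
end

section
/- Key scalar inequality for the radius map: Define s : [0,1] → ℝ by s(θ) = θ·((1 − θ) + √((1 − θ)² + 4θ(1 − θ))). Then for every ρ ∈ [0, 1/3], s(2/3 + ρ) ≤ 8/9 − 3ρ². -/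
open Real Set

/-- **Key scalar inequality for the radius map.** -/
theorem radius_map_key_inequality
    (s : ℝ → ℝ)
    (hs : ∀ θ : ℝ, s θ = θ * ((1 - θ) + Real.sqrt ((1 - θ) ^ 2 + 4 * θ * (1 - θ)))) :
    ∀ ρ : ℝ, ρ ∈ Set.Icc (0 : ℝ) (1 / 3) → s (2 / 3 + ρ) ≤ 8 / 9 - 3 * ρ ^ 2 := by
  intro ρ ⟨h0, h1⟩
  rw [hs]
  set θ : ℝ := 2 / 3 + ρ with hθ
  have hθ0 : (0:ℝ) ≤ θ := by simp [hθ]; linarith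
  have hA : (1 - θ) ^ 2 + 4 * θ * (1 - θ) = 1 - 2*ρ - 3*ρ^2 := by
    simp only [hθ]; ring
  have hB0 : (0:ℝ) ≤ 2/3 + ρ/3 - 2*ρ^2 := by nlinarith
  have key : Real.sqrt ((1 - θ) ^ 2 + 4 * θ * (1 - θ)) ≤ (2/3 + ρ/3 - 2*ρ^2) / θ := by
    rw [hA]
    rw [show (2/3 + ρ/3 - 2*ρ^2) / θ = Real.sqrt (((2/3 + ρ/3 - 2*ρ^2) / θ)^2) from
      (Real.sqrt_sq (by positivity)).symm]
    apply Real.sqrt_le_sqrt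
    rw [div_pow, le_div_iff₀ (by positivity)]
    have : θ^2 = 4/9 + 4*ρ/3 + ρ^2 := by simp [hθ]; ring
    nlinarith [sq_nonneg ρ, pow_le_pow_left₀ h0 h1 2]
  have hθpos : (0:ℝ) < θ := by simp [hθ]; linarith
  calc θ * ((1 - θ) + Real.sqrt ((1 - θ) ^ 2 + 4 * θ * (1 - θ)))
      ≤ θ * ((1 - θ) + (2/3 + ρ/3 - 2*ρ^2) / θ) := by
        apply mul_le_mul_of_nonneg_left _ hθ0
        linarith [key]
    _ = θ * (1 - θ) + (2/3 + ρ/3 - 2*ρ^2) := by field_simp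
    _ ≤ 8 / 9 - 3 * ρ ^ 2 := by simp only [hθ]; nlinarith
end

section
/- Tail bound for the arcsine Taylor series: For every x ∈ [−1, 1] and every M ∈ ℕ, |arcsin(x) − Σ_{n=0}^{M} (1/4^n)·binom(2n, n)·x^{2n+1}/(2n+1)| ≤ (π/2)·|x|^{2M+3}. -/
open Real Finset

noncomputable section ArcsinTail

/-- coefficient of the binomial series for (1-u)^(-1/2) -/
def cc (n : ℕ) : ℝ := (Nat.choose (2 * n) n : ℝ) / 4 ^ n

lemma cc_zero : cc 0 = 1 := by simp [cc]

lemma cc_pos (n : ℕ) : 0 < cc n := by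
  have h : 0 < (Nat.choose (2 * n) n : ℝ) := by
    exact_mod_cast Nat.choose_pos (show n ≤ 2 * n by omega)
  have h4 : (0:ℝ) < 4 ^ n := by positivity
  exact div_pos h h4

lemma cc_rec (n : ℕ) : (2 * (n : ℝ) + 2) * cc (n + 1) = (2 * n + 1) * cc n := by
  have h := Nat.succ_mul_centralBinom_succ n
  have h' : ((n : ℝ) + 1) * (Nat.choose (2 * (n + 1)) (n + 1) : ℝ)
      = 2 * (2 * n + 1) * (Nat.choose (2 * n) n : ℝ) := by
    exact_mod_cast congrArg (Nat.cast : ℕ → ℝ) h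
  have h4 : (4 : ℝ) ^ (n + 1) = 4 * 4 ^ n := by ring
  unfold cc
  rw [h4]
  have h4n : (4:ℝ) ^ n ≠ 0 := by positivity
  field_simp
  nlinarith [h', pow_pos (show (0:ℝ)<4 by norm_num) n]

lemma cc_le_one (n : ℕ) : cc n ≤ 1 := by
  induction n with
  | zero => simp [cc_zero]
  | succ k ih =>
    have h := cc_rec k
    nlinarith [cc_pos k, cc_pos (k + 1)]

/-- partial sum of the binomial series -/
def PP (M : ℕ) (u : ℝ) : ℝ := ∑ n ∈ range (M + 1), cc n * u ^ n

/-- its derivative -/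
def QQ (M : ℕ) (u : ℝ) : ℝ := ∑ n ∈ range M, ((n : ℝ) + 1) * cc (n + 1) * u ^ n

lemma hasDerivAt_PP (M : ℕ) (u : ℝ) : HasDerivAt (PP M) (QQ M u) u := by
  have : PP M = fun u => ∑ n ∈ range (M + 1), cc n * u ^ n := rfl
  rw [this]
  have h : ∀ u : ℝ, ∑ n ∈ range (M + 1), cc n * u ^ n
      = cc 0 + ∑ n ∈ range M, cc (n + 1) * u ^ (n + 1) := by
    intro u
    rw [Finset.sum_range_succ' (fun n => cc n * u ^ n) M]
    simp [add_comm]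
  simp only [h]
  have : HasDerivAt (fun u : ℝ => cc 0 + ∑ n ∈ range M, cc (n + 1) * u ^ (n + 1))
      (0 + ∑ n ∈ range M, cc (n + 1) * (((n : ℝ) + 1) * u ^ n)) u := by
    apply (hasDerivAt_const u (cc 0)).add
    apply HasDerivAt.fun_sum
    intro n _
    have := (hasDerivAt_pow (n + 1) u).const_mul (cc (n + 1))
    simpa using this
  convert this using 1
  unfold QQ
  rw [zero_add]
  exact Finset.sum_congr rfl (fun n _ => by ring)

lemma key_identity (M : ℕ) (u : ℝ) :
    (1 - u) * QQ M u = (1 / 2) * PP M u - ((M : ℝ) + 1) * cc (M + 1) * u ^ M := by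
  have hrec : ∀ n : ℕ, ((n : ℝ) + 1) * cc (n + 1) = ((n : ℝ) + 1 / 2) * cc n := by
    intro n
    have := cc_rec n
    linarith
  unfold QQ PP
  rw [sub_mul, one_mul]
  have h1 : ∑ n ∈ range M, ((n : ℝ) + 1) * cc (n + 1) * u ^ n
      = ∑ n ∈ range M, ((n : ℝ) + 1 / 2) * cc n * u ^ n :=
    Finset.sum_congr rfl (fun n _ => by rw [hrec n])
  have h2 : u * ∑ n ∈ range M, ((n : ℝ) + 1 / 2) * cc n * u ^ n
      = ∑ n ∈ range (M + 1), (n : ℝ) * cc n * u ^ n := by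
    rw [Finset.mul_sum, Finset.sum_range_succ' (fun n => (n : ℝ) * cc n * u ^ n) M]
    simp only [Nat.cast_zero, zero_mul, mul_zero, add_zero, zero_add]
    refine Finset.sum_congr rfl (fun n _ => ?_)
    rw [← hrec n]
    push_cast
    ring
  rw [h1, h2, Finset.sum_range_succ (fun n => (n : ℝ) * cc n * u ^ n) M,
    Finset.sum_range_succ (fun n => cc n * u ^ n) M]
  have h3 : ∑ n ∈ range M, ((n : ℝ) + 1 / 2) * cc n * u ^ n - ∑ n ∈ range M, (n : ℝ) * cc n * u ^ n
      = (1 / 2) * ∑ n ∈ range M, cc n * u ^ n := by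
    rw [← Finset.sum_sub_distrib, Finset.mul_sum]
    exact Finset.sum_congr rfl (fun n _ => by ring)
  have hM := hrec M
  linear_combination h3 + u ^ M * hM


def GG (M : ℕ) (u : ℝ) : ℝ := Real.sqrt (1 - u) * PP M u

lemma continuous_PP (M : ℕ) : Continuous (PP M) := by
  unfold PP
  exact continuous_finset_sum _ (fun n _ => continuous_const.mul (continuous_pow n))

lemma continuous_GG (M : ℕ) : Continuous (GG M) :=
  ((continuous_const.sub continuous_id).sqrt).mul (continuous_PP M)

lemma hasDerivAt_GG (M : ℕ) {u : ℝ} (hu : u < 1) :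
    HasDerivAt (GG M)
      (-(((M : ℝ) + 1) * cc (M + 1) * u ^ M) / Real.sqrt (1 - u)) u := by
  have h1u : (0 : ℝ) < 1 - u := by linarith
  have hs : (0 : ℝ) < Real.sqrt (1 - u) := Real.sqrt_pos.2 h1u
  have hsq : HasDerivAt (fun u : ℝ => Real.sqrt (1 - u))
      (1 / (2 * Real.sqrt (1 - u)) * (-1)) u := by
    exact (Real.hasDerivAt_sqrt h1u.ne').comp u ((hasDerivAt_id u).const_sub 1)
  have hprod : HasDerivAt (GG M) (1 / (2 * Real.sqrt (1 - u)) * (-1) * PP M u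
      + Real.sqrt (1 - u) * QQ M u) u := hsq.mul (hasDerivAt_PP M u)
  convert hprod using 1
  have hid := key_identity M u
  have h2 : Real.sqrt (1 - u) ^ 2 = 1 - u := Real.sq_sqrt h1u.le
  have e1 : 1 / (2 * Real.sqrt (1 - u)) * -1 * PP M u + Real.sqrt (1 - u) * QQ M u
      = (-(PP M u) / 2 + Real.sqrt (1 - u) ^ 2 * QQ M u) / Real.sqrt (1 - u) := by
    field_simp
  rw [e1, h2, hid]
  congr 1
  ring

lemma PP_zero (M : ℕ) : PP M 0 = 1 := by
  unfold PP
  rw [Finset.sum_eq_single_of_mem 0 (Finset.mem_range.2 (Nat.succ_pos M))]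
  · simp [cc_zero]
  · intro b _ hb
    simp [zero_pow hb]

lemma GG_zero (M : ℕ) : GG M 0 = 1 := by
  simp [GG, PP_zero]

lemma GG_le_one (M : ℕ) {u : ℝ} (hu : u ∈ Set.Icc (0 : ℝ) 1) : GG M u ≤ 1 := by
  have hanti : AntitoneOn (GG M) (Set.Icc (0 : ℝ) 1) := by
    apply antitoneOn_of_deriv_nonpos (convex_Icc 0 1) (continuous_GG M).continuousOn
    · intro x hx
      rw [interior_Icc] at hx
      exact ((hasDerivAt_GG M hx.2).differentiableAt).differentiableWithinAt
    · intro x hx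
      rw [interior_Icc] at hx
      rw [(hasDerivAt_GG M hx.2).deriv]
      apply div_nonpos_of_nonpos_of_nonneg
      · have h1 := cc_pos (M + 1)
        have hxM : (0:ℝ) ≤ x ^ M := pow_nonneg hx.1.le M
        have : 0 ≤ ((M : ℝ) + 1) * cc (M + 1) * x ^ M := by positivity
        linarith
      · exact Real.sqrt_nonneg _
  have := hanti (Set.left_mem_Icc.2 zero_le_one) hu hu.1
  rwa [GG_zero] at this

lemma one_sub_le_GG (M : ℕ) {u : ℝ} (hu : u ∈ Set.Icc (0 : ℝ) 1) :
    1 - u ^ (M + 1) ≤ GG M u := by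
  set c := cc (M + 1) with hc
  have hc0 : 0 < c := cc_pos (M + 1)
  have hc1 : c ≤ 1 := cc_le_one (M + 1)
  set u₀ : ℝ := 1 - c ^ 2 with hu₀
  have hu₀0 : 0 ≤ u₀ := by nlinarith
  have hu₀1 : u₀ ≤ 1 := by nlinarith
  set H : ℝ → ℝ := fun u => GG M u + u ^ (M + 1) with hH
  have hcont : Continuous H := (continuous_GG M).add (continuous_pow (M + 1))
  have hder : ∀ {x : ℝ}, x < 1 → HasDerivAt H
      (-(((M : ℝ) + 1) * c * x ^ M) / Real.sqrt (1 - x)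
        + ((M : ℝ) + 1) * x ^ M) x := by
    intro x hx
    have := (hasDerivAt_GG M hx).add (hasDerivAt_pow (M + 1) x)
    simp [Nat.add_sub_cancel] at this
    exact this
  have hH0 : H 0 = 1 := by simp [hH, GG_zero]
  have hH1 : H 1 = 1 := by simp [hH, GG]
  have key : 1 ≤ H u := by
    rcases le_total u u₀ with h | h
    · -- monotone on [0, u₀]
      have hmono : MonotoneOn H (Set.Icc (0 : ℝ) u₀) := by
        apply monotoneOn_of_deriv_nonneg (convex_Icc 0 u₀) hcont.continuousOn
        · intro x hx
          rw [interior_Icc] at hx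
          exact ((hder (lt_of_lt_of_le hx.2 hu₀1)).differentiableAt).differentiableWithinAt
        · intro x hx
          rw [interior_Icc] at hx
          have hx1 : x < 1 := lt_of_lt_of_le hx.2 hu₀1
          rw [(hder hx1).deriv]
          have hs : c ≤ Real.sqrt (1 - x) := by
            rw [show c = Real.sqrt (c ^ 2) from (Real.sqrt_sq hc0.le).symm]
            apply Real.sqrt_le_sqrt
            nlinarith [hx.2]
          have hs0 : 0 < Real.sqrt (1 - x) := lt_of_lt_of_le hc0 hs
          have hxM : (0:ℝ) ≤ x ^ M := pow_nonneg hx.1.le M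
          have hM0 : (0:ℝ) ≤ (M : ℝ) + 1 := by positivity
          rw [neg_div, neg_add_eq_sub, sub_nonneg, div_le_iff₀ hs0]
          nlinarith [mul_le_mul_of_nonneg_left hs (mul_nonneg hM0 hxM)]
      have := hmono (Set.left_mem_Icc.2 hu₀0) ⟨hu.1, h⟩ hu.1
      rwa [hH0] at this
    · -- antitone on [u₀, 1]
      have hanti : AntitoneOn H (Set.Icc u₀ 1) := by
        apply antitoneOn_of_deriv_nonpos (convex_Icc u₀ 1) hcont.continuousOn
        · intro x hx
          rw [interior_Icc] at hx
          exact ((hder hx.2).differentiableAt).differentiableWithinAt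
        · intro x hx
          rw [interior_Icc] at hx
          rw [(hder hx.2).deriv]
          have hx0 : 0 ≤ x := le_trans hu₀0 hx.1.le
          have hs : Real.sqrt (1 - x) ≤ c := by
            rw [show c = Real.sqrt (c ^ 2) from (Real.sqrt_sq hc0.le).symm]
            apply Real.sqrt_le_sqrt
            nlinarith [hx.1]
          have hs0 : 0 ≤ Real.sqrt (1 - x) := Real.sqrt_nonneg _
          have hxM : (0:ℝ) ≤ x ^ M := pow_nonneg hx0 M
          have hM0 : (0:ℝ) ≤ (M : ℝ) + 1 := by positivity
          rcases eq_or_lt_of_le hs0 with hs0' | hs0'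
          · exfalso
            have : (1:ℝ) - x ≤ 0 := by
              by_contra hcon
              push_neg at hcon
              exact absurd (Real.sqrt_pos.2 hcon) (by rw [← hs0']; simp)
            linarith [hx.2]
          · rw [neg_div, neg_add_eq_sub, sub_nonpos, le_div_iff₀ hs0']
            nlinarith [mul_le_mul_of_nonneg_left hs (mul_nonneg hM0 hxM)]
      have := hanti ⟨h, hu.2⟩ (Set.right_mem_Icc.2 hu₀1) hu.2
      rwa [hH1] at this
  simpa [hH] using key

def SS (M : ℕ) (x : ℝ) : ℝ := ∑ n ∈ range (M + 1), cc n * x ^ (2 * n + 1) / (2 * n + 1)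

lemma continuous_SS (M : ℕ) : Continuous (SS M) := by
  unfold SS
  exact continuous_finset_sum _
    (fun n _ => (continuous_const.mul (continuous_pow (2 * n + 1))).div_const _)

lemma hasDerivAt_SS (M : ℕ) (x : ℝ) : HasDerivAt (SS M) (PP M (x ^ 2)) x := by
  unfold SS PP
  apply HasDerivAt.fun_sum
  intro n _
  have h : HasDerivAt (fun x => cc n * x ^ (2 * n + 1) / (2 * (n : ℝ) + 1))
      (cc n * (((2 * n + 1 : ℕ) : ℝ) * x ^ (2 * n + 1 - 1)) / (2 * (n : ℝ) + 1)) x :=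
    ((hasDerivAt_pow (2 * n + 1) x).const_mul (cc n)).div_const
    ((2 * (n : ℝ) + 1))
  have hne : (2 * (n : ℝ) + 1) ≠ 0 := by positivity
  refine h.congr_deriv (Eq.symm ?_)
  rw [show 2 * n + 1 - 1 = 2 * n from rfl, ← pow_mul]
  push_cast
  field_simp

lemma SS_zero (M : ℕ) : SS M 0 = 0 := by
  unfold SS
  apply Finset.sum_eq_zero
  intro n _
  simp [zero_pow (Nat.succ_ne_zero (2 * n))]

lemma arcsin_le_lin {x : ℝ} (hx : x ∈ Set.Icc (0 : ℝ) 1) :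
    Real.arcsin x ≤ π / 2 * x := by
  have h1 : (0 : ℝ) ≤ Real.arcsin x := Real.arcsin_nonneg.2 hx.1
  have h2 : Real.arcsin x ≤ π / 2 := Real.arcsin_le_pi_div_two x
  have h3 := Real.mul_le_sin h1 h2
  rw [Real.sin_arcsin (by linarith [hx.1] : (-1:ℝ) ≤ x) hx.2] at h3
  have hπ : 0 < π := Real.pi_pos
  rw [div_mul_eq_mul_div, div_le_iff₀ hπ] at h3
  rw [mul_comm]
  rw [show π / 2 = π * (1/2) by ring] at *
  nlinarith

lemma core (M : ℕ) {x : ℝ} (hx : x ∈ Set.Icc (0 : ℝ) 1) :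
    0 ≤ Real.arcsin x - SS M x ∧
      Real.arcsin x - SS M x ≤ π / 2 * x ^ (2 * M + 3) := by
  have harcsin : ∀ {t : ℝ}, t ∈ Set.Ioo (0:ℝ) 1 →
      HasDerivAt Real.arcsin (1 / Real.sqrt (1 - t ^ 2)) t := by
    intro t ht
    exact Real.hasDerivAt_arcsin (by linarith [ht.1] : t ≠ -1) (ne_of_lt ht.2)
  have hsqpos : ∀ {t : ℝ}, t ∈ Set.Ioo (0:ℝ) 1 → 0 < Real.sqrt (1 - t ^ 2) := by
    intro t ht
    apply Real.sqrt_pos.2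
    nlinarith [ht.1, ht.2]
  have husq : ∀ {t : ℝ}, t ∈ Set.Ioo (0:ℝ) 1 → t ^ 2 ∈ Set.Icc (0:ℝ) 1 := by
    intro t ht
    exact ⟨sq_nonneg t, by nlinarith [ht.1, ht.2]⟩
  -- f is monotone
  have hf : MonotoneOn (fun t => Real.arcsin t - SS M t) (Set.Icc (0:ℝ) 1) := by
    apply monotoneOn_of_deriv_nonneg (convex_Icc 0 1)
      ((Real.continuous_arcsin.sub (continuous_SS M)).continuousOn)
    · intro t ht
      rw [interior_Icc] at ht
      exact (((harcsin ht).sub (hasDerivAt_SS M t)).differentiableAt).differentiableWithinAt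
    · intro t ht
      rw [interior_Icc] at ht
      rw [((harcsin ht).sub (hasDerivAt_SS M t)).deriv]
      have hs := hsqpos ht
      have hG := GG_le_one M (husq ht)
      unfold GG at hG
      rw [sub_nonneg, le_div_iff₀ hs, mul_comm]
      exact hG
  -- D is monotone
  have hD : MonotoneOn (fun t => t ^ (2 * M + 2) * Real.arcsin t
      - (Real.arcsin t - SS M t)) (Set.Icc (0:ℝ) 1) := by
    apply monotoneOn_of_deriv_nonneg (convex_Icc 0 1)
    · exact (((continuous_pow _).mul Real.continuous_arcsin).sub
        (Real.continuous_arcsin.sub (continuous_SS M))).continuousOn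
    · intro t ht
      rw [interior_Icc] at ht
      exact ((((hasDerivAt_pow (2 * M + 2) t).mul (harcsin ht)).sub
        ((harcsin ht).sub (hasDerivAt_SS M t))).differentiableAt).differentiableWithinAt
    · intro t ht
      rw [interior_Icc] at ht
      rw [(show HasDerivAt (fun t => t ^ (2 * M + 2) * Real.arcsin t - (Real.arcsin t - SS M t)) _ t
        from ((hasDerivAt_pow (2 * M + 2) t).mul (harcsin ht)).sub
        ((harcsin ht).sub (hasDerivAt_SS M t))).deriv]
      have hs := hsqpos ht
      have hG := one_sub_le_GG M (husq ht)
      unfold GG at hG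
      have hpow : (t ^ 2) ^ (M + 1) = t ^ (2 * M + 2) := by
        rw [← pow_mul]; ring_nf
      rw [hpow] at hG
      -- 1/s - PP ≤ t^(2M+2)/s
      have h1 : 1 / Real.sqrt (1 - t ^ 2) - PP M (t ^ 2)
          ≤ t ^ (2 * M + 2) * (1 / Real.sqrt (1 - t ^ 2)) := by
        rw [sub_le_iff_le_add, mul_one_div, div_add' _ _ _ hs.ne', le_div_iff₀ hs,
          one_div_mul_cancel hs.ne']
        nlinarith [hG]
      have h2 : 0 ≤ (↑(2 * M + 2) : ℝ) * t ^ (2 * M + 2 - 1) * Real.arcsin t := by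
        have ha := Real.arcsin_nonneg.2 ht.1.le
        have h2a : (0:ℝ) ≤ (↑(2 * M + 2) : ℝ) := by positivity
        have h2b : (0:ℝ) ≤ t ^ (2 * M + 2 - 1) := pow_nonneg ht.1.le _
        exact mul_nonneg (mul_nonneg h2a h2b) ha
      linarith
  have h0mem : (0:ℝ) ∈ Set.Icc (0:ℝ) 1 := Set.left_mem_Icc.2 zero_le_one
  have hf0 := hf h0mem hx hx.1
  have hD0 := hD h0mem hx hx.1
  simp only [Real.arcsin_zero, SS_zero, sub_zero, zero_sub, neg_zero, mul_zero,
    zero_pow (Nat.succ_ne_zero _), zero_mul, sub_self] at hf0 hD0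
  constructor
  · exact hf0
  · have harc := arcsin_le_lin hx
    have hx0 : 0 ≤ x := hx.1
    have hpow3 : x ^ (2 * M + 2) * (π / 2 * x) = π / 2 * x ^ (2 * M + 3) := by
      rw [show 2 * M + 3 = (2 * M + 2) + 1 from rfl, pow_succ]
      ring
    have hxp : (0:ℝ) ≤ x ^ (2 * M + 2) := pow_nonneg hx0 _
    nlinarith [hD0, mul_le_mul_of_nonneg_left harc hxp]

end ArcsinTail

/-- **Tail bound for the arcsine Taylor series.** -/
theorem arcsin_taylor_tail (x : ℝ) (hx : x ∈ Set.Icc (-1 : ℝ) 1) (M : ℕ) :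
    |Real.arcsin x - ∑ n ∈ Finset.range (M + 1),
        (1 / 4 ^ n) * (Nat.choose (2 * n) n : ℝ) * x ^ (2 * n + 1) / (2 * n + 1)| ≤
      π / 2 * |x| ^ (2 * M + 3) := by
  have hsum : ∀ y : ℝ, (∑ n ∈ Finset.range (M + 1),
      (1 / 4 ^ n) * (Nat.choose (2 * n) n : ℝ) * y ^ (2 * n + 1) / (2 * n + 1)) = SS M y := by
    intro y
    unfold SS
    refine Finset.sum_congr rfl (fun n _ => ?_)
    unfold cc
    ring
  rw [hsum]
  rcases le_total 0 x with h0 | h0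
  · have hcore := core M ⟨h0, hx.2⟩
    rw [abs_of_nonneg hcore.1, abs_of_nonneg h0]
    exact hcore.2
  · have hy0 : 0 ≤ -x := by linarith
    have hy1 : -x ≤ 1 := by linarith [hx.1]
    have hcore := core M ⟨hy0, hy1⟩
    have hodd : SS M x = -SS M (-x) := by
      unfold SS
      rw [← Finset.sum_neg_distrib]
      refine Finset.sum_congr rfl (fun n _ => ?_)
      rw [show x = -(-x) by ring, Odd.neg_pow ⟨n, by ring⟩]
      ring
    have harc : Real.arcsin x = -Real.arcsin (-x) := by
      rw [Real.arcsin_neg, neg_neg]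
    rw [harc, hodd,
      show -Real.arcsin (-x) - -SS M (-x) = -(Real.arcsin (-x) - SS M (-x)) by ring,
      abs_neg, abs_of_nonneg hcore.1, abs_of_nonpos h0]
    exact hcore.2
end
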